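/- arXiv:1502.03978 — 4 statements merged into one kernel-verified Lean document; each statement's English description precedes it below -/
import Mathlib

section
/- With strikes j₀ = 0 < j₁ < ... < j_I and the piecewise linear CALL function q⁰ of formula (3.1), the function q⁰ is the pointwise largest function among all convex, nonincreasing functions f : [0,∞) → [0,∞) satisfying f(j_i) ≤ q(j_i) for all i = 0, ..., I. -/
namespace PWCall

/-- Value at index `n`, clamped to `I`. -/
noncomputable def A {I : ℕ} (j : Fin (I + 1) → ℝ) (n : ℕ) : ℝ :=
  j ⟨min n I, Nat.lt_succ_of_le (min_le_right n I)⟩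

/-- Slope of piece `n` (zero beyond the last strike). -/
noncomputable def S {I : ℕ} (j q : Fin (I + 1) → ℝ) (n : ℕ) : ℝ :=
  if n < I then (A q (n + 1) - A q n) / (A j (n + 1) - A j n) else 0

/-- Affine extension of piece `n`. -/
noncomputable def L {I : ℕ} (j q : Fin (I + 1) → ℝ) (n : ℕ) (k : ℝ) : ℝ :=
  A q n + S j q n * (k - A j n)

lemma A_eq {I : ℕ} (j : Fin (I + 1) → ℝ) {n : ℕ} (h : n ≤ I) :
    A j n = j ⟨n, Nat.lt_succ_of_le h⟩ := by
  unfold A; congr 1; exact Fin.ext (Nat.min_eq_left h)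

lemma A_stable {I : ℕ} (j : Fin (I + 1) → ℝ) {n : ℕ} (h : I ≤ n) :
    A j n = A j I := by
  unfold A; congr 1
  exact Fin.ext (by simp [Nat.min_eq_right h])

lemma A_mono {I : ℕ} {j : Fin (I + 1) → ℝ} (hj : StrictMono j) :
    Monotone (A j) := by
  intro m n h
  exact hj.monotone (by simp only [Fin.mk_le_mk]; omega)

lemma A_strict {I : ℕ} {j : Fin (I + 1) → ℝ} (hj : StrictMono j) {n : ℕ}
    (h : n < I) : A j n < A j (n + 1) := by
  exact hj (by simp only [Fin.mk_lt_mk]; omega)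

end PWCall

open PWCall in
/-- The piecewise-linear CALL function `q⁰` is the pointwise largest convex,
nonincreasing, nonnegative function lying weakly below the data points
`(jᵢ, q(jᵢ))`, and it attains the data values. -/
theorem piecewise_linear_call_function_is_largest
    (I : ℕ) (j : Fin (I + 1) → ℝ) (q : Fin (I + 1) → ℝ) (q0 : ℝ → ℝ)
    (hj0 : j 0 = 0) (hjmono : StrictMono j)
    (hqpos : ∀ i, 0 < q i)
    (hslope_nonpos : ∀ i : Fin I,
      (q i.succ - q i.castSucc) / (j i.succ - j i.castSucc) ≤ 0)
    (hslope_mono : ∀ i i' : Fin I, i ≤ i' →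
      (q i.succ - q i.castSucc) / (j i.succ - j i.castSucc) ≤
        (q i'.succ - q i'.castSucc) / (j i'.succ - j i'.castSucc))
    (hq0_zero : q0 0 = q 0)
    (hq0_interp : ∀ i : Fin I, ∀ k, j i.castSucc < k → k ≤ j i.succ →
      q0 k = ((j i.succ - k) * q i.castSucc + (k - j i.castSucc) * q i.succ) /
        (j i.succ - j i.castSucc))
    (hq0_tail : ∀ k, j (Fin.last I) < k → q0 k = q (Fin.last I)) :
    (ConvexOn ℝ (Set.Ici (0 : ℝ)) q0 ∧ AntitoneOn q0 (Set.Ici (0 : ℝ)) ∧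
      (∀ k ∈ Set.Ici (0 : ℝ), 0 ≤ q0 k) ∧ (∀ i, q0 (j i) = q i)) ∧
    ∀ f : ℝ → ℝ,
      ConvexOn ℝ (Set.Ici (0 : ℝ)) f → AntitoneOn f (Set.Ici (0 : ℝ)) →
      (∀ k ∈ Set.Ici (0 : ℝ), 0 ≤ f k) → (∀ i, f (j i) ≤ q i) →
      ∀ k ∈ Set.Ici (0 : ℝ), f k ≤ q0 k := by
  have hAj0 : A j 0 = 0 := by
    rw [A_eq j (Nat.zero_le I)]; exact hj0
  have hAmono : Monotone (A j) := A_mono hjmono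
  have hAnonneg : ∀ n, 0 ≤ A j n := fun n => hAj0 ▸ hAmono (Nat.zero_le n)
  have hd : ∀ n, n < I → 0 < A j (n + 1) - A j n :=
    fun n h => sub_pos.2 (A_strict hjmono h)
  -- slopes are nonpositive
  have hS_nonpos : ∀ n, S j q n ≤ 0 := by
    intro n; unfold S; split
    · rename_i h
      rw [A_eq j (by omega), A_eq j h.le, A_eq q (by omega), A_eq q h.le]
      exact hslope_nonpos ⟨n, h⟩
    · exact le_refl 0
  -- slopes are monotone
  have hS_mono : ∀ m n, m ≤ n → S j q m ≤ S j q n := by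
    intro m n hmn
    by_cases hn : n < I
    · have hm : m < I := lt_of_le_of_lt hmn hn
      unfold S; rw [if_pos hn, if_pos hm]
      rw [A_eq j (by omega), A_eq j hm.le, A_eq q (by omega), A_eq q hm.le,
        A_eq j (by omega), A_eq j hn.le, A_eq q (by omega), A_eq q hn.le]
      exact hslope_mono ⟨m, hm⟩ ⟨n, hn⟩ (by simp [Fin.mk_le_mk, hmn])
    · have : S j q n = 0 := if_neg hn
      rw [this]; exact hS_nonpos m
  have hB_eq_slope : ∀ n, n < I →
      A q (n + 1) - A q n = S j q n * (A j (n + 1) - A j n) := by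
    intro n h; unfold S; rw [if_pos h, div_mul_cancel₀ _ (hd n h).ne']
  have hLdiff : ∀ n k, L j q (n + 1) k - L j q n k
      = (S j q (n + 1) - S j q n) * (k - A j (n + 1)) := by
    intro n k
    by_cases h : n < I
    · have h1 := hB_eq_slope n h
      unfold L; linear_combination h1
    · have e1 : A q (n + 1) = A q n := by
        rw [A_stable q (n := n + 1) (by omega), A_stable q (n := n) (by omega)]
      have e2 : A j (n + 1) = A j n := by
        rw [A_stable j (n := n + 1) (by omega), A_stable j (n := n) (by omega)]
      have e3 : S j q n = 0 := if_neg h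
      have e4 : S j q (n + 1) = 0 := if_neg (by omega)
      unfold L; rw [e1, e2, e3, e4]; ring
  have hL_antitone : ∀ n (x y : ℝ), x ≤ y → L j q n y ≤ L j q n x := by
    intro n x y hxy; unfold L
    have := hS_nonpos n; nlinarith
  -- going up: for k ≥ A j n, pieces below n lie below piece n
  have hchainUp : ∀ (k : ℝ) n m, m ≤ n → A j n ≤ k → L j q m k ≤ L j q n k := by
    intro k n
    induction n with
    | zero => intro m hm _; rw [Nat.le_zero.mp hm]
    | succ n ih =>
      intro m hm hk
      have hstep : L j q n k ≤ L j q (n + 1) k := by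
        have hD := hLdiff n k
        have h1 : 0 ≤ S j q (n + 1) - S j q n :=
          sub_nonneg.2 (hS_mono n (n + 1) (by omega))
        have h2 : 0 ≤ k - A j (n + 1) := sub_nonneg.2 hk
        nlinarith
      rcases Nat.eq_or_lt_of_le hm with rfl | hm'
      · exact le_refl _
      · exact (ih m (by omega) (le_trans (hAmono (by omega)) hk)).trans hstep
  -- going down: for k ≤ A j (n+1), pieces above n lie below piece n
  have hchainDown : ∀ (k : ℝ) n m, n ≤ m → k ≤ A j (n + 1) →
      L j q m k ≤ L j q n k := by
    intro k n m
    induction m with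
    | zero => intro hm _; rw [Nat.le_zero.mp hm]
    | succ m ih =>
      intro hm hk
      rcases Nat.eq_or_lt_of_le hm with rfl | hm'
      · exact le_refl _
      · have hnm : n ≤ m := by omega
        have hstep : L j q (m + 1) k ≤ L j q m k := by
          have hD := hLdiff m k
          have h1 : 0 ≤ S j q (m + 1) - S j q m :=
            sub_nonneg.2 (hS_mono m (m + 1) (by omega))
          have h2 : k - A j (m + 1) ≤ 0 := by
            have : A j (n + 1) ≤ A j (m + 1) := hAmono (by omega)
            linarith
          nlinarith
        exact hstep.trans (ih hnm hk)
  -- locating a point in an interval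
  have hfind : ∀ (k : ℝ), 0 < k → ∀ N, k ≤ A j N →
      ∃ n, n < N ∧ A j n < k ∧ k ≤ A j (n + 1) := by
    intro k hk N
    induction N with
    | zero => intro h; exfalso; rw [hAj0] at h; linarith
    | succ N ih =>
      intro h
      by_cases h' : k ≤ A j N
      · obtain ⟨n, h1, h2, h3⟩ := ih h'
        exact ⟨n, by omega, h2, h3⟩
      · exact ⟨N, Nat.lt_succ_self N, lt_of_not_ge h', h⟩
  -- interpolation formula in A-notation
  have hq0int : ∀ n, n < I → ∀ k : ℝ, A j n < k → k ≤ A j (n + 1) →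
      q0 k = ((A j (n + 1) - k) * A q n + (k - A j n) * A q (n + 1)) /
        (A j (n + 1) - A j n) := by
    intro n hn k h1 h2
    rw [A_eq j hn.le] at h1 ⊢
    rw [A_eq j (by omega)] at h2 ⊢
    rw [A_eq q hn.le, A_eq q (by omega)]
    exact hq0_interp ⟨n, hn⟩ k h1 h2
  have hq0L : ∀ n, n < I → ∀ k : ℝ, A j n < k → k ≤ A j (n + 1) →
      q0 k = L j q n k := by
    intro n hn k h1 h2
    rw [hq0int n hn k h1 h2]
    unfold L S; rw [if_pos hn]
    have hne : A j (n + 1) - A j n ≠ 0 := (hd n hn).ne'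
    field_simp
    ring
  have hLI : ∀ (m : ℕ) (k : ℝ), I ≤ m → L j q m k = A q I := by
    intro m k hm; unfold L S
    rw [if_neg (by omega), A_stable q hm]; ring
  -- the main representation: q0 is pointwise the max of the affine pieces
  have hmain : ∀ k : ℝ, 0 ≤ k →
      ∃ n, q0 k = L j q n k ∧ ∀ m, L j q m k ≤ L j q n k := by
    intro k hk
    rcases hk.eq_or_lt with hk0 | hk'
    · subst hk0
      refine ⟨0, ?_, fun m => ?_⟩
      · have : L j q 0 0 = q 0 := by
          unfold L; rw [hAj0, A_eq q (Nat.zero_le I)]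
          norm_num
        rw [this, hq0_zero]
      · exact hchainDown 0 0 m (Nat.zero_le m) (hAj0 ▸ hAmono (Nat.zero_le 1))
    · by_cases hkI : k ≤ A j I
      · obtain ⟨n, hn, h1, h2⟩ := hfind k hk' I hkI
        refine ⟨n, hq0L n hn k h1 h2, fun m => ?_⟩
        rcases le_total m n with h | h
        · exact hchainUp k n m h h1.le
        · exact hchainDown k n m h h2
      · push_neg at hkI
        refine ⟨I, ?_, fun m => ?_⟩
        · rw [hLI I k le_rfl, A_eq q le_rfl]
          have hjI : j (Fin.last I) = A j I := (A_eq j le_rfl).symm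
          exact hq0_tail k (by rw [hjI]; exact hkI)
        · rcases le_total m I with h | h
          · exact hchainUp k I m h hkI.le
          · rw [hLI m k h, hLI I k le_rfl]
  have hUB : ∀ k : ℝ, 0 ≤ k → ∀ m, L j q m k ≤ q0 k := by
    intro k hk m
    obtain ⟨n, h1, h2⟩ := hmain k hk
    rw [h1]; exact h2 m
  constructor
  · refine ⟨⟨convex_Ici 0, ?_⟩, ?_, ?_, ?_⟩
    · -- convexity
      intro x hx y hy μ ν hμ hν hμν
      simp only [smul_eq_mul]
      have hz : (0 : ℝ) ≤ μ * x + ν * y := by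
        have hx' : (0 : ℝ) ≤ x := hx
        have hy' : (0 : ℝ) ≤ y := hy
        positivity
      obtain ⟨n, h1, _⟩ := hmain (μ * x + ν * y) hz
      rw [h1]
      have e : L j q n (μ * x + ν * y) = μ * L j q n x + ν * L j q n y := by
        unfold L
        linear_combination (S j q n * A j n - A q n) * hμν
      rw [e]
      exact add_le_add (mul_le_mul_of_nonneg_left (hUB x hx n) hμ)
        (mul_le_mul_of_nonneg_left (hUB y hy n) hν)
    · -- antitone
      intro x hx y hy hxy
      obtain ⟨n, h1, _⟩ := hmain y hy
      rw [h1]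
      exact (hL_antitone n x y hxy).trans (hUB x hx n)
    · -- nonneg
      intro k hk
      have h1 : L j q I k = A q I := hLI I k le_rfl
      have h2 : (0 : ℝ) < A q I := by
        rw [A_eq q le_rfl]; exact hqpos _
      exact le_of_lt (lt_of_lt_of_le (h1 ▸ h2) (hUB k hk I))
    · -- interpolation of data values
      rintro ⟨n, hn⟩
      match n, hn with
      | 0, hn => rw [show (⟨0, hn⟩ : Fin (I + 1)) = 0 from rfl, hj0, hq0_zero]
      | (m + 1), hn =>
        have hm : m < I := by omega
        have h1 : A j m < A j (m + 1) := A_strict hjmono hm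
        have h2 : q0 (A j (m + 1)) = L j q m (A j (m + 1)) :=
          hq0L m hm (A j (m + 1)) h1 le_rfl
        have h3 : L j q m (A j (m + 1)) = A q (m + 1) := by
          have := hB_eq_slope m hm
          unfold L; linear_combination -this
        rw [← A_eq j (by omega : m + 1 ≤ I), ← A_eq q (by omega : m + 1 ≤ I), h2, h3]
  · -- maximality
    intro f hconv hanti hfnonneg hdata k hk
    have hk0 : (0 : ℝ) ≤ k := hk
    rcases hk0.eq_or_lt with hke | hk'
    · have := hdata 0
      rw [hj0] at this
      rw [← hke, hq0_zero]
      exact this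
    · have hdataA : ∀ n, n ≤ I → f (A j n) ≤ A q n := by
        intro n hn
        rw [A_eq j hn, A_eq q hn]
        exact hdata _
      by_cases hkI : k ≤ A j I
      · obtain ⟨n, hn, h1, h2⟩ := hfind k hk' I hkI
        have hdpos : 0 < A j (n + 1) - A j n := hd n hn
        set μ : ℝ := (A j (n + 1) - k) / (A j (n + 1) - A j n) with hμdef
        set ν : ℝ := (k - A j n) / (A j (n + 1) - A j n) with hνdef
        have hμ : 0 ≤ μ := div_nonneg (by linarith) hdpos.le
        have hν : 0 ≤ ν := div_nonneg (by linarith) hdpos.le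
        have hμν : μ + ν = 1 := by
          rw [hμdef, hνdef, ← add_div]
          field_simp
          ring
        have hxmem : A j n ∈ Set.Ici (0 : ℝ) := hAnonneg n
        have hymem : A j (n + 1) ∈ Set.Ici (0 : ℝ) := hAnonneg (n + 1)
        have hcomb : μ • A j n + ν • A j (n + 1) = k := by
          simp only [smul_eq_mul, hμdef, hνdef]
          field_simp
          ring
        have key := hconv.2 hxmem hymem hμ hν hμν
        rw [hcomb] at key
        have hf1 : f (A j n) ≤ A q n := hdataA n hn.le
        have hf2 : f (A j (n + 1)) ≤ A q (n + 1) := hdataA (n + 1) (by omega)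
        have : f k ≤ μ * A q n + ν * A q (n + 1) := by
          refine key.trans ?_
          simp only [smul_eq_mul]
          exact add_le_add (mul_le_mul_of_nonneg_left hf1 hμ)
            (mul_le_mul_of_nonneg_left hf2 hν)
        rw [hq0int n hn k h1 h2]
        refine this.trans (le_of_eq ?_)
        rw [hμdef, hνdef]
        have hne : A j (n + 1) - A j n ≠ 0 := hdpos.ne'
        field_simp
      · push_neg at hkI
        have hjI : j (Fin.last I) = A j I := (A_eq j le_rfl).symm
        rw [hq0_tail k (hjI ▸ hkI)]
        have h1 : f k ≤ f (A j I) :=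
          hanti (hAnonneg I) hk (le_of_lt hkI)
        have h2 : f (A j I) ≤ A q I := hdataA I le_rfl
        have h3 : A q I = q (Fin.last I) := A_eq q le_rfl
        linarith [h3 ▸ h2]
end

section
/- With φ, Φ, and g_k^h(x; φ) as in the density-smoothing construction, the function x ↦ g_k^h(x; φ) is convex, nondecreasing, nonnegative, and satisfies 0 ≤ g_k^h(x; φ) − max(x − k, 0) ≤ h·∫ |u|·φ(u) du for all x; in particular g_k^h(·; φ) converges uniformly to the call payoff g⁰_k as h → 0. -/
open MeasureTheory

/-- The density-smoothed call payoff `g_k^h(·;φ)` is convex, nondecreasing,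
nonnegative, satisfies `0 ≤ g_k^h(x;φ) − max(x−k,0) ≤ h·∫|u|φ(u)du`, and in
particular converges uniformly to the call payoff as `h → 0⁺`. -/
theorem density_smoother_properties
    (φ : ℝ → ℝ) (k : ℝ)
    (hφ_nonneg : ∀ u, 0 ≤ φ u)
    (hφ_int : Integrable φ)
    (hφ_prob : ∫ u, φ u = 1)
    (hmean : ∫ u, u * φ u = 0)
    (habs : Integrable (fun u => |u| * φ u))
    (Φ : ℝ → ℝ) (hΦ : ∀ t, Φ t = ∫ u in Set.Iic t, φ u)
    (g : ℝ → ℝ → ℝ)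
    (hg : ∀ h x, g h x = Φ ((x - k) / h) * (x - k) -
      h * ∫ u in Set.Iic ((x - k) / h), u * φ u) :
    (∀ h : ℝ, 0 < h →
      ConvexOn ℝ Set.univ (g h) ∧ Monotone (g h) ∧ (∀ x, 0 ≤ g h x) ∧
      ∀ x, 0 ≤ g h x - max (x - k) 0 ∧
        g h x - max (x - k) 0 ≤ h * ∫ u, |u| * φ u) ∧
    TendstoUniformly (fun h x => g h x) (fun x => max (x - k) 0)
      (nhdsWithin 0 (Set.Ioi 0)) := by
  have hφm := hφ_int.1
  set C := ∫ u, |u| * φ u with hCdef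
  have hC0 : 0 ≤ C :=
    integral_nonneg fun u => mul_nonneg (abs_nonneg u) (hφ_nonneg u)
  have hintu : Integrable (fun u => u * φ u) := by
    refine habs.mono' (continuous_id.aestronglyMeasurable.mul hφm)
      (Filter.Eventually.of_forall fun u => ?_)
    rw [Real.norm_eq_abs, abs_mul, abs_of_nonneg (hφ_nonneg u)]
  -- integrability of the max integrands
  have hmax_int : ∀ c h : ℝ, 0 ≤ h →
      Integrable (fun u => max (c - h * u) 0 * φ u) := by
    intro c h hh
    refine Integrable.mono' ((hφ_int.const_mul (max c 0)).add (habs.const_mul h))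
      (((continuous_const.sub (continuous_const.mul continuous_id)).max
        continuous_const).aestronglyMeasurable.mul hφm)
      (Filter.Eventually.of_forall fun u => ?_)
    have h1 : max (c - h * u) 0 ≤ max c 0 + h * |u| := by
      apply max_le
      · nlinarith [neg_abs_le u, le_max_left c 0, abs_nonneg u]
      · positivity
    have h2 : (0:ℝ) ≤ max (c - h * u) 0 := le_max_right _ _
    rw [Real.norm_eq_abs, abs_of_nonneg (mul_nonneg h2 (hφ_nonneg u))]
    calc max (c - h*u) 0 * φ u ≤ (max c 0 + h * |u|) * φ u :=
          mul_le_mul_of_nonneg_right h1 (hφ_nonneg u)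
      _ = max c 0 * φ u + h * (|u| * φ u) := by ring
  have hint_lin : ∀ c h' : ℝ, Integrable (fun u => (c - h' * u) * φ u) := by
    intro c h'
    have e : (fun u => (c - h'*u) * φ u) = fun u => c * φ u - h' * (u * φ u) := by
      funext u; ring
    rw [e]; exact (hφ_int.const_mul c).sub (hintu.const_mul h')
  have hint_lin_val : ∀ c h' : ℝ, ∫ u, (c - h' * u) * φ u = c := by
    intro c h'
    have e : (fun u => (c - h'*u) * φ u) = fun u => c * φ u - h' * (u * φ u) := by
      funext u; ring
    rw [e, integral_sub (hφ_int.const_mul c) (hintu.const_mul h'),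
      integral_const_mul, integral_const_mul, hφ_prob, hmean]; ring
  -- key representation
  have hrep : ∀ h : ℝ, 0 < h → ∀ x, g h x = ∫ u, max (x - k - h * u) 0 * φ u := by
    intro h hh x
    set t := (x - k) / h with ht
    have hxk : x - k = h * t := by rw [ht]; field_simp
    rw [hg, ← ht, hΦ, ← integral_mul_const, ← integral_const_mul,
      ← integral_sub ((hφ_int.restrict).mul_const (x - k))
        ((hintu.restrict).const_mul h)]
    rw [← setIntegral_eq_integral_of_forall_compl_eq_zero
      (s := Set.Iic t) (f := fun u => max (x - k - h * u) 0 * φ u) ?_]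
    · apply setIntegral_congr_fun measurableSet_Iic
      intro u hu
      have hu' : u ≤ t := hu
      have : 0 ≤ x - k - h * u := by
        rw [hxk]; nlinarith
      simp only [max_eq_left this]
      ring
    · intro u hu
      have hu' : t < u := lt_of_not_ge hu
      have : x - k - h * u < 0 := by rw [hxk]; nlinarith
      simp [max_eq_right this.le]
  have hmono : ∀ h : ℝ, 0 < h → Monotone (g h) := by
    intro h hh x y hxy
    rw [hrep h hh x, hrep h hh y]
    refine integral_mono (hmax_int _ h hh.le) (hmax_int _ h hh.le) fun u => ?_
    exact mul_le_mul_of_nonneg_right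
      (max_le_max (by linarith) le_rfl) (hφ_nonneg u)
  have hnn : ∀ h : ℝ, 0 < h → ∀ x, 0 ≤ g h x := by
    intro h hh x
    rw [hrep h hh x]
    exact integral_nonneg fun u => mul_nonneg (le_max_right _ _) (hφ_nonneg u)
  have hlow : ∀ h : ℝ, 0 < h → ∀ x, x - k ≤ g h x := by
    intro h hh x
    rw [hrep h hh x]
    refine le_trans (le_of_eq (hint_lin_val (x - k) h).symm) ?_
    refine integral_mono (hint_lin _ _) (hmax_int _ h hh.le) fun u => ?_
    exact mul_le_mul_of_nonneg_right (le_max_left _ _) (hφ_nonneg u)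
  have hup : ∀ h : ℝ, 0 < h → ∀ x, g h x ≤ max (x - k) 0 + h * C := by
    intro h hh x
    rw [hrep h hh x]
    calc ∫ u, max (x - k - h * u) 0 * φ u
        ≤ ∫ u, (max (x - k) 0 * φ u + h * (|u| * φ u)) := by
          refine integral_mono (hmax_int _ h hh.le)
            ((hφ_int.const_mul _).add (habs.const_mul h)) fun u => ?_
          have h1 : max (x - k - h * u) 0 ≤ max (x - k) 0 + h * |u| := by
            apply max_le
            · nlinarith [neg_abs_le u, le_max_left (x - k) 0, abs_nonneg u]
            · positivity
          calc max (x - k - h*u) 0 * φ u ≤ (max (x - k) 0 + h * |u|) * φ u :=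
                mul_le_mul_of_nonneg_right h1 (hφ_nonneg u)
            _ = max (x - k) 0 * φ u + h * (|u| * φ u) := by ring
      _ = max (x - k) 0 + h * C := by
          rw [integral_add (hφ_int.const_mul _) (habs.const_mul h),
            integral_const_mul, integral_const_mul, hφ_prob, hCdef]; ring
  have hconv : ∀ h : ℝ, 0 < h → ConvexOn ℝ Set.univ (g h) := by
    intro h hh
    refine ⟨convex_univ, fun x _ y _ a b ha hb hab => ?_⟩
    simp only [smul_eq_mul]
    rw [hrep h hh, hrep h hh x, hrep h hh y]
    calc ∫ u, max (a * x + b * y - k - h * u) 0 * φ u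
        ≤ ∫ u, (a * max (x - k - h * u) 0 + b * max (y - k - h * u) 0) * φ u := by
          refine integral_mono (hmax_int _ h hh.le) ?_ fun u => ?_
          · have e : (fun u => (a * max (x - k - h * u) 0
                + b * max (y - k - h * u) 0) * φ u)
                = fun u => a * (max (x - k - h * u) 0 * φ u)
                  + b * (max (y - k - h * u) 0 * φ u) := by funext u; ring
            rw [e]
            exact ((hmax_int _ h hh.le).const_mul a).add
              ((hmax_int _ h hh.le).const_mul b)
          · refine mul_le_mul_of_nonneg_right ?_ (hφ_nonneg u)
            apply max_le
            · calc a * x + b * y - k - h * u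
                  = a * (x - k - h * u) + b * (y - k - h * u) := by
                    linear_combination (k + h * u) * hab
                _ ≤ a * max (x - k - h * u) 0 + b * max (y - k - h * u) 0 :=
                    add_le_add
                      (mul_le_mul_of_nonneg_left (le_max_left _ _) ha)
                      (mul_le_mul_of_nonneg_left (le_max_left _ _) hb)
            · have h1 := mul_nonneg ha (le_max_right (x - k - h*u) (0:ℝ))
              have h2 := mul_nonneg hb (le_max_right (y - k - h*u) (0:ℝ))
              linarith
      _ = a * (∫ u, max (x - k - h * u) 0 * φ u)
          + b * ∫ u, max (y - k - h * u) 0 * φ u := by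
          have e : (fun u => (a * max (x - k - h * u) 0
              + b * max (y - k - h * u) 0) * φ u)
              = fun u => a * (max (x - k - h * u) 0 * φ u)
                + b * (max (y - k - h * u) 0 * φ u) := by funext u; ring
          rw [e, integral_add ((hmax_int _ h hh.le).const_mul a)
            ((hmax_int _ h hh.le).const_mul b),
            integral_const_mul, integral_const_mul]
  refine ⟨fun h hh => ⟨hconv h hh, hmono h hh, hnn h hh, fun x =>
    ⟨sub_nonneg.2 (max_le (hlow h hh x) (hnn h hh x)), by
      have := hup h hh x; linarith⟩⟩, ?_⟩
  rw [Metric.tendstoUniformly_iff]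
  intro ε hε
  have hδ : (0:ℝ) < ε / (C + 1) := by positivity
  filter_upwards [Ioo_mem_nhdsGT_of_mem
    (Set.left_mem_Ico.2 hδ)] with h hh x
  obtain ⟨hh0, hhδ⟩ := hh
  have hle : g h x - max (x - k) 0 ≤ h * C := by
    have := hup h hh0 x; linarith
  have hge : 0 ≤ g h x - max (x - k) 0 :=
    sub_nonneg.2 (max_le (hlow h hh0 x) (hnn h hh0 x))
  rw [Real.dist_eq, abs_sub_comm, abs_of_nonneg hge]
  calc g h x - max (x - k) 0 ≤ h * C := hle
    _ ≤ h * (C + 1) := by nlinarith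
    _ < ε / (C + 1) * (C + 1) := by
        exact mul_lt_mul_of_pos_right hhδ (by linarith)
    _ = ε := by field_simp
end

section
/- Let ν be a finite Borel measure on [0,∞) with finite first moment and define C(t) = ∫ max(x − t, 0) dν(x). Then C is convex and nonincreasing on [0,∞), and at every continuity point t of z ↦ ν((z,∞)), C is differentiable with C'(t) = −ν((t, ∞)). -/
open MeasureTheory

lemma bl_integrable (ν : Measure ℝ) [IsFiniteMeasure ν]
    (hmom : Integrable (fun x => x) ν) (t : ℝ) :
    Integrable (fun x => max (x - t) 0) ν := by
  refine (hmom.abs.add (integrable_const |t|)).mono ?_ ?_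
  · exact ((continuous_id.sub continuous_const).max continuous_const).aestronglyMeasurable
  · filter_upwards with x
    have h1 : max (x - t) 0 ≤ |x| + |t| := by
      apply max_le
      · linarith [le_abs_self x, neg_le_abs t]
      · positivity
    simp only [Pi.add_apply, Real.norm_eq_abs]
    rw [abs_of_nonneg (le_max_right _ _),
      abs_of_nonneg (by positivity : (0:ℝ) ≤ |x| + |t|)]
    exact h1

lemma bl_key (ν : Measure ℝ) [IsFiniteMeasure ν]
    (hmom : Integrable (fun x => x) ν) {a b : ℝ} (hab : a ≤ b) :
    (∫ x, max (x - a) 0 ∂ν) - ∫ x, max (x - b) 0 ∂ν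
      = ∫ s in a..b, (ν (Set.Ioi s)).toReal := by
  set g : ℝ → ℝ := fun x => max (x - a) 0 - max (x - b) 0 with hg
  have hgnn : ∀ x, 0 ≤ g x := by
    intro x
    simp only [hg, sub_nonneg]
    exact max_le_max (by linarith) le_rfl
  have hgle : ∀ x, g x ≤ b - a := by
    intro x
    rcases le_total x b with h | h
    · have : max (x - b) 0 = 0 := max_eq_right (by linarith)
      simp only [hg, this, sub_zero]
      exact max_le (by linarith) (by linarith)
    · have h1 : max (x - a) 0 = x - a := max_eq_left (by linarith)
      have h2 : max (x - b) 0 = x - b := max_eq_left (by linarith)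
      simp only [hg, h1, h2]; linarith
  have hgint : Integrable g ν := (bl_integrable ν hmom a).sub (bl_integrable ν hmom b)
  have h1 : (∫ x, max (x - a) 0 ∂ν) - ∫ x, max (x - b) 0 ∂ν = ∫ x, g x ∂ν := by
    rw [← integral_sub (bl_integrable ν hmom a) (bl_integrable ν hmom b)]
  rw [h1, hgint.integral_eq_integral_meas_lt (Filter.Eventually.of_forall hgnn)]
  have hset : ∀ s ∈ Set.Ioi (0:ℝ), (ν {x | s < g x}).toReal
      = Set.indicator (Set.Ioo 0 (b - a)) (fun s => (ν (Set.Ioi (a + s))).toReal) s := by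
    intro s hs
    simp only [Set.mem_Ioi] at hs
    by_cases hsb : s < b - a
    · have hst : {x : ℝ | s < g x} = Set.Ioi (a + s) := by
        ext x
        simp only [Set.mem_setOf_eq, Set.mem_Ioi]
        constructor
        · intro h
          have h2 : g x ≤ max (x - a) 0 := by
            simp only [hg]
            linarith [le_max_right (x - b) (0:ℝ)]
          have h3 : s < max (x - a) 0 := lt_of_lt_of_le h h2
          rcases lt_max_iff.mp h3 with h4 | h4
          · linarith
          · linarith
        · intro h
          rcases le_total x b with hxb | hxb
          · have e2 : max (x - b) 0 = 0 := max_eq_right (by linarith)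
            have e1 : max (x - a) 0 = x - a := max_eq_left (by linarith)
            simp only [hg, e1, e2]; linarith
          · have e1 : max (x - a) 0 = x - a := max_eq_left (by linarith)
            have e2 : max (x - b) 0 = x - b := max_eq_left (by linarith)
            simp only [hg, e1, e2]; linarith
      rw [hst, Set.indicator_of_mem (show s ∈ Set.Ioo (0:ℝ) (b - a) from ⟨hs, hsb⟩)]
    · have hst : {x : ℝ | s < g x} = ∅ := by
        ext x
        simp only [Set.mem_setOf_eq, Set.mem_empty_iff_false, iff_false, not_lt]
        linarith [hgle x]
      have hnot : s ∉ Set.Ioo (0:ℝ) (b - a) := by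
        simp only [Set.mem_Ioo, not_and, not_lt]
        intro _
        linarith
      rw [hst, Set.indicator_of_notMem hnot, measure_empty]
      simp
  simp only [measureReal_def]
  rw [setIntegral_congr_fun measurableSet_Ioi hset,
    setIntegral_indicator measurableSet_Ioo,
    Set.inter_eq_self_of_subset_right Set.Ioo_subset_Ioi_self]
  have h2 : ∫ s in Set.Ioo (0:ℝ) (b - a), (ν (Set.Ioi (a + s))).toReal
      = ∫ s in (0:ℝ)..(b - a), (ν (Set.Ioi (a + s))).toReal := by
    rw [intervalIntegral.integral_of_le (by linarith), ← integral_Ioc_eq_integral_Ioo]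
  rw [h2, intervalIntegral.integral_comp_add_left (fun s => (ν (Set.Ioi s)).toReal) a]
  norm_num

/-- Breeden–Litzenberger: `C(t) = ∫ max(x − t, 0) dν(x)` is convex and
nonincreasing on `[0,∞)`, and at every continuity point `t ≥ 0` of the survival
function `z ↦ ν((z,∞))`, `C` is differentiable with `C'(t) = −ν((t,∞))`. -/
theorem breeden_litzenberger
    (ν : Measure ℝ) [IsFiniteMeasure ν]
    (hsupp : ν (Set.Iio 0) = 0)
    (hmom : Integrable (fun x => x) ν)
    (C : ℝ → ℝ) (hC : ∀ t, C t = ∫ x, max (x - t) 0 ∂ν) :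
    ConvexOn ℝ (Set.Ici (0 : ℝ)) C ∧
    AntitoneOn C (Set.Ici (0 : ℝ)) ∧
    ∀ t : ℝ, 0 ≤ t →
      ContinuousAt (fun z => (ν (Set.Ioi z)).toReal) t →
      HasDerivAt C (-(ν (Set.Ioi t)).toReal) t := by
  have hint := bl_integrable ν hmom
  refine ⟨⟨convex_Ici 0, ?_⟩, ?_, ?_⟩
  · intro p _ q _ u v hu hv huv
    simp only [smul_eq_mul]
    rw [hC, hC, hC]
    calc ∫ x, max (x - (u * p + v * q)) 0 ∂ν
        ≤ ∫ x, (u * max (x - p) 0 + v * max (x - q) 0) ∂ν := by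
          apply integral_mono (hint _) (((hint p).const_mul u).add ((hint q).const_mul v))
          intro x
          simp only [Pi.add_apply]
          apply max_le
          · have e1 : u * (x - p) ≤ u * max (x - p) 0 :=
              mul_le_mul_of_nonneg_left (le_max_left _ _) hu
            have e2 : v * (x - q) ≤ v * max (x - q) 0 :=
              mul_le_mul_of_nonneg_left (le_max_left _ _) hv
            have e0 : u * (x - p) + v * (x - q) = x - (u * p + v * q) := by
              rw [show u = 1 - v from by linarith]
              ring
            linarith
          · have e1 : 0 ≤ u * max (x - p) 0 := by positivity
            have e2 : 0 ≤ v * max (x - q) 0 := by positivity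
            linarith
      _ = u * ∫ x, max (x - p) 0 ∂ν + v * ∫ x, max (x - q) 0 ∂ν := by
          rw [integral_add ((hint p).const_mul u) ((hint q).const_mul v),
            integral_const_mul, integral_const_mul]
  · intro p _ q _ hpq
    rw [hC, hC]
    apply integral_mono (hint q) (hint p)
    intro x
    exact max_le_max (by linarith) le_rfl
  · intro t _ hcont
    set F : ℝ → ℝ := fun s => (ν (Set.Ioi s)).toReal with hF
    have hFanti : Antitone F := fun s s' h =>
      ENNReal.toReal_mono (measure_ne_top ν _) (measure_mono (Set.Ioi_subset_Ioi h))
    have hFm : Measurable F :=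
      (Antitone.measurable hFanti)
    have hd : HasDerivAt (fun u => ∫ s in (t - 1)..u, F s) (F t) t :=
      intervalIntegral.integral_hasDerivAt_right hFanti.intervalIntegrable
        ⟨Set.univ, Filter.univ_mem, hFm.aestronglyMeasurable⟩ hcont
    have hd2 : HasDerivAt (fun u => C (t - 1) - ∫ s in (t - 1)..u, F s) (-(F t)) t :=
      hd.const_sub _
    have heq : C =ᶠ[nhds t] (fun u => C (t - 1) - ∫ s in (t - 1)..u, F s) := by
      filter_upwards [Ioi_mem_nhds (by linarith : t - 1 < t)] with u hu
      have hk := bl_key ν hmom (le_of_lt hu)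
      rw [← hC (t - 1), ← hC u] at hk
      simp only [hF]
      linarith
    exact hd2.congr_of_eventuallyEq heq
end

section
/- Let Z = {0 = τ₀ < τ₁ < ... < τ_I} be a finite set of strikes and w_k(τ) ≥ 0 superhedging weights with Σ_{τ∈Z} w_k(τ) = 1, supported (except possibly at τ = 0) on strikes τ with |k − τ| < (1+δ)·M where M is the mesh of Z\{0}. If F : [0,∞) → [0,∞) is convex, decreasing, three times continuously differentiable with |F'''| ≤ α, and τ₁ ≤ k − δM, then |Σ_{τ∈Z} w_k(τ)·(F(τ) − F(k))| ≤ |F'(k)|·(δ+1)·M + F''(k)·(δ+1)²·M² + (α/6)·(1+δ)³·M³. -/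
open Finset

private lemma iterDW_eq {f : ℝ → ℝ} (hf : ContDiff ℝ 3 f) {s : Set ℝ} (hs : UniqueDiffOn ℝ s)
    {x : ℝ} (hx : x ∈ s) {m : ℕ} (hm : (m : ℕ∞) ≤ 3) :
    iteratedDerivWithin m f s x = iteratedDeriv m f x := by
  rw [iteratedDerivWithin_eq_iteratedFDerivWithin, iteratedDeriv_eq_iteratedFDeriv,
    ← ((contDiff_iff_ftaylorSeries.mp hf).hasFTaylorSeriesUpToOn
        s).eq_iteratedFDerivWithin_of_uniqueDiffOn (by exact_mod_cast hm) hs hx]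
  rfl

private lemma taylor3_right {f : ℝ → ℝ} {α : ℝ} (hf : ContDiff ℝ 3 f)
    (hf3 : ∀ x, |iteratedDeriv 3 f x| ≤ α) {a b : ℝ} (hab : a < b) :
    |f b - f a - deriv f a * (b - a) - deriv (deriv f) a / 2 * (b - a) ^ 2|
      ≤ α / 6 * (b - a) ^ 3 := by
  have hud : UniqueDiffOn ℝ (Set.Icc a b) := uniqueDiffOn_Icc hab
  have hEq : ∀ m : ℕ, (m : ℕ∞) ≤ 3 → ∀ x ∈ Set.Icc a b,
      iteratedDerivWithin m f (Set.Icc a b) x = iteratedDeriv m f x :=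
    fun m hm x hx => iterDW_eq hf hud hx hm
  have hdiff2 : Differentiable ℝ (iteratedDeriv 2 f) :=
    hf.differentiable_iteratedDeriv 2 (by norm_num)
  have hf' : DifferentiableOn ℝ (iteratedDerivWithin 2 f (Set.Icc a b)) (Set.Ioo a b) := by
    apply (hdiff2.differentiableOn).congr
    intro x hx
    exact hEq 2 (by norm_num) x (Set.Ioo_subset_Icc_self hx)
  obtain ⟨x', hx', heq⟩ := taylor_mean_remainder_lagrange (n := 2) hab.ne
    (by rw [Set.uIcc_of_le hab.le]; exact (hf.of_le (by norm_num)).contDiffOn)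
    (by rw [Set.uIcc_of_le hab.le, Set.uIoo_of_le hab.le]; exact hf')
  rw [Set.uIoo_of_le hab.le] at hx'
  rw [Set.uIcc_of_le hab.le] at heq
  have hmem : a ∈ Set.Icc a b := Set.left_mem_Icc.mpr hab.le
  rw [taylor_within_apply] at heq
  simp only [Finset.sum_range_succ, Finset.sum_range_zero] at heq
  rw [hEq 0 (by norm_num) a hmem, hEq 1 (by norm_num) a hmem, hEq 2 (by norm_num) a hmem,
    hEq 3 (by norm_num) x' (Set.Ioo_subset_Icc_self hx')] at heq
  simp only [iteratedDeriv_zero, iteratedDeriv_one, smul_eq_mul] at heq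
  have h2 : iteratedDeriv 2 f = deriv (deriv f) := by
    rw [show (2 : ℕ) = 1 + 1 from rfl, iteratedDeriv_succ, iteratedDeriv_one]
  rw [h2] at heq
  norm_num [Nat.factorial] at heq
  have hrw : f b - f a - deriv f a * (b - a) - deriv (deriv f) a / 2 * (b - a) ^ 2
      = iteratedDeriv 3 f x' * (b - a) ^ 3 / 6 := by
    linear_combination heq
  rw [hrw, abs_div, abs_mul, abs_pow]
  rw [abs_of_pos (by linarith : (0:ℝ) < b - a), abs_of_pos (by norm_num : (0:ℝ) < 6)]
  calc |iteratedDeriv 3 f x'| * (b - a) ^ 3 / 6 ≤ α * (b - a) ^ 3 / 6 := by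
        have hba : (0:ℝ) ≤ (b - a) ^ 3 := pow_nonneg (by linarith) 3
        gcongr
        exact hf3 x'
    _ = α / 6 * (b - a) ^ 3 := by ring

private lemma taylor3_abs {f : ℝ → ℝ} {α : ℝ} (hf : ContDiff ℝ 3 f)
    (hf3 : ∀ x, |iteratedDeriv 3 f x| ≤ α) (k x : ℝ) :
    |f x - f k - deriv f k * (x - k) - deriv (deriv f) k / 2 * (x - k) ^ 2|
      ≤ α / 6 * |x - k| ^ 3 := by
  rcases lt_trichotomy x k with hx | hx | hx
  · -- reflect
    have hgc : ContDiff ℝ 3 (fun y => f (2 * k - y)) :=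
      hf.comp (contDiff_const.sub contDiff_id)
    have hgd : ∀ n : ℕ, ∀ y : ℝ,
        iteratedDeriv n (fun y => f (2 * k - y)) y = (-1:ℝ)^n * iteratedDeriv n f (2*k - y) := by
      intro n y
      have h := iteratedDeriv_comp_neg (F := ℝ) n (fun z => f (2*k + z)) y
      simp only [smul_eq_mul] at h
      have h2 : (fun y : ℝ => f (2 * k - y)) = (fun y : ℝ => f (2 * k + -y)) := by
        funext t; rw [sub_eq_add_neg]
      rw [h2, h, iteratedDeriv_comp_const_add]
      ring_nf
    have hg3 : ∀ y, |iteratedDeriv 3 (fun y => f (2 * k - y)) y| ≤ α := by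
      intro y
      rw [hgd 3 y, abs_mul]
      calc |(-1:ℝ)^3| * |iteratedDeriv 3 f (2*k - y)| = |iteratedDeriv 3 f (2*k - y)| := by
            norm_num
        _ ≤ α := hf3 _
    have hd1 : deriv (fun y => f (2 * k - y)) k = -(deriv f k) := by
      have h := hgd 1 k
      rw [iteratedDeriv_one, iteratedDeriv_one] at h
      rw [h, show 2*k - k = k by ring]; ring
    have hd2 : deriv (deriv (fun y => f (2 * k - y))) k = deriv (deriv f) k := by
      have e2 : ∀ g : ℝ → ℝ, iteratedDeriv 2 g = deriv (deriv g) := by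
        intro g
        rw [show (2 : ℕ) = 1 + 1 from rfl, iteratedDeriv_succ, iteratedDeriv_one]
      have h := hgd 2 k
      rw [e2, e2] at h
      rw [h, show 2*k - k = k by ring]; ring
    have hab : k < 2 * k - x := by linarith
    have h := taylor3_right hgc hg3 hab
    rw [show 2 * k - (2 * k - x) = x by ring, show 2 * k - k = k by ring, hd1, hd2] at h
    have habs : |x - k| = k - x := by
      rw [abs_sub_comm]; exact abs_of_pos (by linarith)
    rw [habs]
    have hinner : f x - f k - deriv f k * (x - k) - deriv (deriv f) k / 2 * (x - k) ^ 2
        = f x - f k - -(deriv f k) * (2 * k - x - k) - deriv (deriv f) k / 2 * (2*k - x - k) ^ 2 := by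
      ring
    rw [hinner]
    calc _ ≤ α / 6 * (2 * k - x - k) ^ 3 := h
      _ = α / 6 * (k - x) ^ 3 := by ring
  · subst hx; simp
  · have h := taylor3_right hf hf3 hx
    have habs : |x - k| = x - k := abs_of_pos (by linarith)
    rw [habs]
    exact h

/-- Bias bound from the proof of Theorem 3: if the superhedging weights sum to 1,
are supported within the window `|k − τ| < (1+δ)M` (except possibly at strike 0,
which is ruled out by `τ₁ ≤ k − δM`), and `F` is convex, decreasing, `C³` with
`|F'''| ≤ α`, then the bias is bounded by
`|F'(k)|(δ+1)M + F''(k)(δ+1)²M² + (α/6)(1+δ)³M³`. -/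
theorem bias_bound
    (I : ℕ) (hI : 0 < I) (τ : ℕ → ℝ) (hτ0 : τ 0 = 0) (hτmono : StrictMono τ)
    (M δ α k : ℝ) (hM : 0 ≤ M) (hδ : 0 < δ) (hα : 0 ≤ α) (hk : 0 < k)
    (hmesh : ∀ i, 1 ≤ i → i < I → τ (i + 1) - τ i ≤ M)
    (w : ℕ → ℝ)
    (hw_nonneg : ∀ i ≤ I, 0 ≤ w i)
    (hw_sum : ∑ i ∈ Finset.range (I + 1), w i = 1)
    (hw_supp : ∀ i, 1 ≤ i → i ≤ I → w i ≠ 0 → |k - τ i| < (1 + δ) * M)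
    (hw_zero : w 0 ≠ 0 → k - δ * M < τ 1)
    (F : ℝ → ℝ)
    (hF_nonneg : ∀ x, 0 ≤ x → 0 ≤ F x)
    (hF_conv : ConvexOn ℝ (Set.Ici (0 : ℝ)) F)
    (hF_anti : AntitoneOn F (Set.Ici (0 : ℝ)))
    (hF_smooth : ContDiff ℝ 3 F)
    (hF3 : ∀ x, |iteratedDeriv 3 F x| ≤ α)
    (hτ1 : τ 1 ≤ k - δ * M) :
    |∑ i ∈ Finset.range (I + 1), w i * (F (τ i) - F k)| ≤
      |deriv F k| * (δ + 1) * M + deriv (deriv F) k * (δ + 1) ^ 2 * M ^ 2 +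
        (α / 6) * (1 + δ) ^ 3 * M ^ 3 := by
  -- notation
  set N : ℝ := (1 + δ) * M with hN
  set C : ℝ := |deriv F k| * N + deriv (deriv F) k / 2 * N ^ 2 + α / 6 * N ^ 3 with hC
  have hN0 : 0 ≤ N := by
    have : (0:ℝ) < 1 + δ := by linarith
    exact mul_nonneg this.le hM
  -- the weight at zero vanishes
  have hw0 : w 0 = 0 := by
    by_contra h
    have := hw_zero h
    linarith
  -- second derivative is nonnegative at k
  have hdF : Differentiable ℝ (deriv F) := by
    have h1 : Differentiable ℝ (iteratedDeriv 1 F) :=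
      hF_smooth.differentiable_iteratedDeriv 1 (by norm_num)
    rwa [iteratedDeriv_one] at h1
  have hmono : MonotoneOn (deriv F) (Set.Ici 0) :=
    hF_conv.monotoneOn_deriv (fun x _ => (hF_smooth.differentiable (by norm_num)) x)
  have hdd : 0 ≤ deriv (deriv F) k := by
    have hda : HasDerivAt (deriv F) (deriv (deriv F) k) k := (hdF k).hasDerivAt
    have ht : Filter.Tendsto (slope (deriv F) k) (nhdsWithin k (Set.Ioi k))
        (nhds (deriv (deriv F) k)) := by
      refine (hasDerivAt_iff_tendsto_slope.mp hda).mono_left (nhdsWithin_mono k ?_)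
      intro y hy
      simp only [Set.mem_compl_iff, Set.mem_singleton_iff]
      exact ne_of_gt hy
    refine ge_of_tendsto ht ?_
    filter_upwards [self_mem_nhdsWithin] with y hy
    have hyk : k < y := hy
    have hle : deriv F k ≤ deriv F y :=
      hmono (Set.mem_Ici.mpr hk.le) (Set.mem_Ici.mpr (by linarith)) hyk.le
    rw [slope_def_field]
    exact div_nonneg (by linarith) (by linarith)
  -- termwise bound
  have key : ∀ i ∈ Finset.range (I + 1), |w i * (F (τ i) - F k)| ≤ w i * C := by
    intro i hi
    have hiI : i ≤ I := Nat.lt_succ_iff.mp (Finset.mem_range.mp hi)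
    rcases eq_or_ne (w i) 0 with hz | hz
    · simp [hz]
    · have hi1 : 1 ≤ i := by
        rcases Nat.eq_zero_or_pos i with h0 | h0
        · exact absurd (h0 ▸ hw0) hz
        · exact h0
      have htau : |τ i - k| ≤ N := by
        rw [abs_sub_comm]
        exact (hw_supp i hi1 hiI hz).le
      have h0 : (0:ℝ) ≤ |τ i - k| := abs_nonneg _
      have htay := taylor3_abs hF_smooth hF3 k (τ i)
      have hb : |F (τ i) - F k| ≤ α/6 * |τ i - k|^3 + |deriv F k| * |τ i - k|
          + deriv (deriv F) k / 2 * (τ i - k)^2 := by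
        have e : F (τ i) - F k =
            (F (τ i) - F k - deriv F k * (τ i - k) - deriv (deriv F) k / 2 * (τ i - k)^2)
            + (deriv F k * (τ i - k) + deriv (deriv F) k / 2 * (τ i - k)^2) := by ring
        have e' : |F (τ i) - F k| =
            |(F (τ i) - F k - deriv F k * (τ i - k) - deriv (deriv F) k / 2 * (τ i - k)^2)
            + (deriv F k * (τ i - k) + deriv (deriv F) k / 2 * (τ i - k)^2)| := congrArg abs e
        have t1 := abs_add_le
          (F (τ i) - F k - deriv F k * (τ i - k) - deriv (deriv F) k / 2 * (τ i - k)^2)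
          (deriv F k * (τ i - k) + deriv (deriv F) k / 2 * (τ i - k)^2)
        have t2 := abs_add_le (deriv F k * (τ i - k)) (deriv (deriv F) k / 2 * (τ i - k)^2)
        have t3 : |deriv F k * (τ i - k)| = |deriv F k| * |τ i - k| := abs_mul _ _
        have t4 : |deriv (deriv F) k / 2 * (τ i - k)^2|
            = deriv (deriv F) k / 2 * (τ i - k)^2 :=
          abs_of_nonneg (mul_nonneg (by linarith) (sq_nonneg _))
        linarith [htay]
      have hFC : |F (τ i) - F k| ≤ C := by
        have p3 : |τ i - k|^3 ≤ N^3 := pow_le_pow_left₀ h0 htau 3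
        have p2 : (τ i - k)^2 ≤ N^2 := by
          rw [← sq_abs]
          exact pow_le_pow_left₀ h0 htau 2
        have b3 : α/6 * |τ i - k|^3 ≤ α/6 * N^3 :=
          mul_le_mul_of_nonneg_left p3 (by linarith)
        have b2 : deriv (deriv F) k / 2 * (τ i - k)^2 ≤ deriv (deriv F) k / 2 * N^2 :=
          mul_le_mul_of_nonneg_left p2 (by linarith)
        have b1 : |deriv F k| * |τ i - k| ≤ |deriv F k| * N :=
          mul_le_mul_of_nonneg_left htau (abs_nonneg _)
        rw [hC]
        linarith
      have hwi : 0 ≤ w i := hw_nonneg i hiI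
      rw [abs_mul, abs_of_nonneg hwi]
      exact mul_le_mul_of_nonneg_left hFC hwi
  -- sum it up
  have hsum : |∑ i ∈ Finset.range (I + 1), w i * (F (τ i) - F k)| ≤ C := by
    calc |∑ i ∈ Finset.range (I + 1), w i * (F (τ i) - F k)|
        ≤ ∑ i ∈ Finset.range (I + 1), |w i * (F (τ i) - F k)| :=
          Finset.abs_sum_le_sum_abs _ _
      _ ≤ ∑ i ∈ Finset.range (I + 1), w i * C := Finset.sum_le_sum key
      _ = (∑ i ∈ Finset.range (I + 1), w i) * C := by rw [Finset.sum_mul]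
      _ = C := by rw [hw_sum, one_mul]
  refine hsum.trans ?_
  have hsq : 0 ≤ N ^ 2 := sq_nonneg _
  have hfact : 0 ≤ deriv (deriv F) k / 2 * N ^ 2 := mul_nonneg (by linarith) hsq
  rw [hC, hN]
  nlinarith [mul_nonneg hdd hsq]
end
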